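/- Let B be a quasi-greedy (with constant C_q) and n-order-conservative (with constant Δ_oc) basis. Then for every 0 < t ≤ 1, B is n-t-partially greedy: there is a constant C (depending only on t, C_q, Δ_oc and the scalar field) such that ‖x − P_A(x)‖ ≤ C‖x − S_n(x)‖ for every x ∈ X, every n ∈ n, and every t-greedy set A for x with |A| = n, where S_n is the n-th partial sum. -/

import Mathlib

open Finset

section helpers
variable {X : Type} [NormedAddCommGroup X] [NormedSpace ℝ X]
variable {e : ℕ → X} {f : ℕ → X →L[ℝ] ℝ} {Cq : ℝ}

theorem coef_sum (hbi : ∀ i j, f i (e j) = if i = j then (1 : ℝ) else 0)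
    (Z : Finset ℕ) (c : ℕ → ℝ) (j : ℕ) :
    f j (∑ i ∈ Z, c i • e i) = if j ∈ Z then c j else 0 := by
  rw [map_sum]
  have : ∀ i ∈ Z, f j (c i • e i) = if i = j then c i else 0 := by
    intro i _
    rw [ContinuousLinearMap.map_smul, hbi j i, smul_eq_mul]
    by_cases h : j = i
    · simp [h]
    · rw [if_neg h, mul_zero, if_neg (fun hij : i = j => h hij.symm)]
  rw [Finset.sum_congr rfl this, Finset.sum_ite_eq' Z j c]

theorem sf (hbi : ∀ i j, f i (e j) = if i = j then (1 : ℝ) else 0)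
    (hQG : ∀ (x : X) (A : Finset ℕ),
      (∀ i ∈ A, ∀ j ∉ A, |f j x| ≤ |f i x|) → ‖∑ i ∈ A, f i x • e i‖ ≤ Cq * ‖x‖)
    {Z E : Finset ℕ} (hEZ : E ⊆ Z) {ε ε' : ℕ → ℝ}
    (hε : ∀ i ∈ Z, |ε i| = 1) (hε' : ∀ i ∈ E, |ε' i| = 1) :
    ‖∑ i ∈ E, ε' i • e i‖ ≤ 2 * Cq * ‖∑ i ∈ Z, ε i • e i‖ := by
  set v := ∑ i ∈ Z, ε i • e i with hv
  have hcoef : ∀ j, f j v = if j ∈ Z then ε j else 0 := coef_sum hbi Z ε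
  have habs : ∀ j, |f j v| ≤ 1 := by
    intro j
    rw [hcoef j]
    by_cases h : j ∈ Z
    · simp [h, (hε j h).le]
    · simp [h]
  have hproj : ∀ D : Finset ℕ, D ⊆ Z → ‖∑ i ∈ D, ε i • e i‖ ≤ Cq * ‖v‖ := by
    intro D hDZ
    have hg : ∀ i ∈ D, ∀ j ∉ D, |f j v| ≤ |f i v| := by
      intro i hi j _
      have : |f i v| = 1 := by rw [hcoef i, if_pos (hDZ hi)]; exact hε i (hDZ hi)
      rw [this]; exact habs j
    have := hQG v D hg
    have heq : ∑ i ∈ D, f i v • e i = ∑ i ∈ D, ε i • e i := by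
      apply Finset.sum_congr rfl
      intro i hi
      rw [hcoef i, if_pos (hDZ hi)]
    rwa [heq] at this
  set D := E.filter (fun i => ε' i = ε i) with hD
  set D' := E.filter (fun i => ¬ ε' i = ε i) with hD'
  have e1 : ∑ i ∈ D, ε' i • e i = ∑ i ∈ D, ε i • e i := by
    apply Finset.sum_congr rfl; intro i hi
    rw [(Finset.mem_filter.mp hi).2]
  have e2 : ∑ i ∈ D', ε' i • e i = - ∑ i ∈ D', ε i • e i := by
    rw [← Finset.sum_neg_distrib]
    apply Finset.sum_congr rfl; intro i hi
    obtain ⟨hiE, hne⟩ := Finset.mem_filter.mp hi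
    have h1 : |ε' i| = 1 := hε' i hiE
    have h2 : |ε i| = 1 := hε i (hEZ hiE)
    have : ε' i = -ε i := by
      rcases abs_eq (by norm_num : (0:ℝ) ≤ 1) |>.mp h1 with h | h <;>
      rcases abs_eq (by norm_num : (0:ℝ) ≤ 1) |>.mp h2 with h' | h' <;>
        rw [h, h'] at hne ⊢ <;> norm_num at hne <;> norm_num
    rw [this, neg_smul]
  have hsplit : ∑ i ∈ E, ε' i • e i = (∑ i ∈ D, ε i • e i) - ∑ i ∈ D', ε i • e i := by
    rw [← Finset.sum_filter_add_sum_filter_not E (fun i => ε' i = ε i) (fun i => ε' i • e i),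
      ← hD, ← hD', e1, e2, ← sub_eq_add_neg]
  rw [hsplit]
  have h1 := hproj D (le_trans (Finset.filter_subset _ _) hEZ)
  have h2 := hproj D' (le_trans (Finset.filter_subset _ _) hEZ)
  calc ‖(∑ i ∈ D, ε i • e i) - ∑ i ∈ D', ε i • e i‖
      ≤ ‖∑ i ∈ D, ε i • e i‖ + ‖∑ i ∈ D', ε i • e i‖ := norm_sub_le _ _
    _ ≤ Cq * ‖v‖ + Cq * ‖v‖ := add_le_add h1 h2
    _ = 2 * Cq * ‖v‖ := by ring


theorem claimR
    (hQG : ∀ (x : X) (A : Finset ℕ),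
      (∀ i ∈ A, ∀ j ∉ A, |f j x| ≤ |f i x|) → ‖∑ i ∈ A, f i x • e i‖ ≤ Cq * ‖x‖)
    (G : Finset ℕ) : ∀ (v : X) (μ : ℝ), 0 < μ → (∀ i ∈ G, μ ≤ |f i v|) →
    (∀ j ∉ G, |f j v| ≤ μ) →
    ‖∑ i ∈ G, ((1/μ - 1/|f i v|) * f i v) • e i‖ ≤ (1/μ) * (Cq * ‖v‖) := by
  induction G using Finset.strongInduction with
  | _ G ih =>
    intro v μ hμ h1 h2
    rcases G.eq_empty_or_nonempty with rfl | hne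
    · simp only [Finset.sum_empty, norm_zero]
      have h0 : (0:ℝ) ≤ Cq * ‖v‖ := by
        have := hQG v ∅ (by simp)
        simpa using this
      positivity
    · obtain ⟨j₀, hj₀, hmin⟩ := G.exists_min_image (fun i => |f i v|) hne
      set m₁ := |f j₀ v| with hm₁
      have hμm : μ ≤ m₁ := h1 j₀ hj₀
      have hm₁pos : 0 < m₁ := lt_of_lt_of_le hμ hμm
      have hgreedy : ∀ i ∈ G, ∀ j ∉ G, |f j v| ≤ |f i v| :=
        fun i hi j hj => le_trans (h2 j hj) (h1 i hi)
      have hPG : ‖∑ i ∈ G, f i v • e i‖ ≤ Cq * ‖v‖ := hQG v G hgreedy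
      -- split: R(G,μ) = R(G,m₁) + (1/μ - 1/m₁) • P_G v
      have hsplit : ∑ i ∈ G, ((1/μ - 1/|f i v|) * f i v) • e i
          = (∑ i ∈ G, ((1/m₁ - 1/|f i v|) * f i v) • e i)
            + (1/μ - 1/m₁) • ∑ i ∈ G, f i v • e i := by
        rw [Finset.smul_sum, ← Finset.sum_add_distrib]
        apply Finset.sum_congr rfl
        intro i _
        rw [smul_smul, ← add_smul]
        congr 1
        ring
      -- R(G,m₁) = R(G.erase j₀, m₁)
      have herase : ∑ i ∈ G, ((1/m₁ - 1/|f i v|) * f i v) • e i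
          = ∑ i ∈ G.erase j₀, ((1/m₁ - 1/|f i v|) * f i v) • e i := by
        rw [← Finset.sum_erase_add G _ hj₀]
        have : (1/m₁ - 1/|f j₀ v|) * f j₀ v = 0 := by
          rw [← hm₁]; ring
        rw [this, zero_smul, add_zero]
      have hIH : ‖∑ i ∈ G.erase j₀, ((1/m₁ - 1/|f i v|) * f i v) • e i‖
          ≤ (1/m₁) * (Cq * ‖v‖) := by
        apply ih (G.erase j₀) (Finset.erase_ssubset hj₀) v m₁ hm₁pos
        · intro i hi; exact hmin i (Finset.mem_of_mem_erase hi)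
        · intro j hj
          by_cases hjG : j ∈ G
          · have : j = j₀ := by
              by_contra hne'
              exact hj (Finset.mem_erase.mpr ⟨hne', hjG⟩)
            rw [this]
          · exact le_trans (h2 j hjG) hμm
      have hCqv : (0:ℝ) ≤ Cq * ‖v‖ := by
        have := hQG v ∅ (by simp)
        simpa using this
      calc ‖∑ i ∈ G, ((1/μ - 1/|f i v|) * f i v) • e i‖
          ≤ ‖∑ i ∈ G, ((1/m₁ - 1/|f i v|) * f i v) • e i‖
            + ‖(1/μ - 1/m₁) • ∑ i ∈ G, f i v • e i‖ := by rw [hsplit]; exact norm_add_le _ _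
        _ ≤ (1/m₁) * (Cq * ‖v‖) + (1/μ - 1/m₁) * (Cq * ‖v‖) := by
            apply add_le_add
            · rw [herase]; exact hIH
            · rw [norm_smul, Real.norm_eq_abs, abs_of_nonneg (by
                have := one_div_le_one_div_of_le hμ hμm
                linarith)]
              exact mul_le_mul_of_nonneg_left hPG (by
                have := one_div_le_one_div_of_le hμ hμm
                linarith)
        _ = (1/μ) * (Cq * ‖v‖) := by ring

theorem trunc
    (hQG : ∀ (x : X) (A : Finset ℕ),
      (∀ i ∈ A, ∀ j ∉ A, |f j x| ≤ |f i x|) → ‖∑ i ∈ A, f i x • e i‖ ≤ Cq * ‖x‖)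
    (G : Finset ℕ) (v : X) (m : ℝ) (hm : 0 < m) (h1 : ∀ i ∈ G, m ≤ |f i v|)
    (h2 : ∀ j ∉ G, |f j v| ≤ m) :
    m * ‖∑ i ∈ G, (f i v / |f i v|) • e i‖ ≤ 2 * (Cq * ‖v‖) := by
  have hgreedy : ∀ i ∈ G, ∀ j ∉ G, |f j v| ≤ |f i v| :=
    fun i hi j hj => le_trans (h2 j hj) (h1 i hi)
  have hPG : ‖∑ i ∈ G, f i v • e i‖ ≤ Cq * ‖v‖ := hQG v G hgreedy
  have hR := claimR hQG G v m hm h1 h2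
  have hid : m • ∑ i ∈ G, (f i v / |f i v|) • e i
      = (∑ i ∈ G, f i v • e i) - m • ∑ i ∈ G, ((1/m - 1/|f i v|) * f i v) • e i := by
    rw [Finset.smul_sum, Finset.smul_sum, ← Finset.sum_sub_distrib]
    apply Finset.sum_congr rfl
    intro i hi
    rw [smul_smul, smul_smul, ← sub_smul]
    congr 1
    have habs : |f i v| ≠ 0 := ne_of_gt (lt_of_lt_of_le hm (h1 i hi))
    field_simp
    ring
  have : ‖m • ∑ i ∈ G, (f i v / |f i v|) • e i‖ ≤ Cq * ‖v‖ + m * ((1/m) * (Cq * ‖v‖)) := by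
    rw [hid]
    refine le_trans (norm_sub_le _ _) (add_le_add hPG ?_)
    rw [norm_smul, Real.norm_eq_abs, abs_of_pos hm]
    exact mul_le_mul_of_nonneg_left hR hm.le
  rw [norm_smul, Real.norm_eq_abs, abs_of_pos hm] at this
  have hmne : m ≠ 0 := ne_of_gt hm
  calc m * ‖∑ i ∈ G, (f i v / |f i v|) • e i‖
      ≤ Cq * ‖v‖ + m * ((1/m) * (Cq * ‖v‖)) := this
    _ = 2 * (Cq * ‖v‖) := by field_simp; ring

theorem box (E : Finset ℕ) : ∀ (b : ℕ → ℝ) (M Γ : ℝ), 0 ≤ M →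
    (∀ j ∈ E, |b j| ≤ M) →
    (∀ E' ⊆ E, ∀ ε : ℕ → ℝ, (∀ i ∈ E', |ε i| = 1) → ‖∑ i ∈ E', ε i • e i‖ ≤ Γ) →
    ‖∑ j ∈ E, b j • e j‖ ≤ M * Γ := by
  induction E using Finset.strongInduction with
  | _ E ih =>
    intro b M Γ hM hb hΓ
    rcases E.eq_empty_or_nonempty with rfl | hne
    · simp only [Finset.sum_empty, norm_zero]
      have hΓ0 : (0:ℝ) ≤ Γ := by
        have := hΓ ∅ (Finset.empty_subset _) (fun _ => 1) (by simp)
        simpa using this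
      positivity
    · obtain ⟨j₀, hj₀, hmin⟩ := E.exists_min_image (fun j => |b j|) hne
      set β := |b j₀| with hβ
      set σ : ℕ → ℝ := fun j => if 0 ≤ b j then 1 else -1 with hσ
      have hσabs : ∀ j, |σ j| = 1 := by
        intro j; by_cases h : 0 ≤ b j <;> simp [hσ, h]
      have hbσ : ∀ j, b j = σ j * |b j| := by
        intro j
        by_cases h : 0 ≤ b j
        · simp [hσ, h, abs_of_nonneg h]
        · simp [hσ, h, abs_of_neg (lt_of_not_ge h)]
      have hβM : β ≤ M := le_trans (le_refl _) (hb j₀ hj₀)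
      have hβ0 : 0 ≤ β := abs_nonneg _
      set b' : ℕ → ℝ := fun j => b j - β * σ j with hb'
      have hsplit : ∑ j ∈ E, b j • e j
          = β • (∑ j ∈ E, σ j • e j) + ∑ j ∈ E.erase j₀, b' j • e j := by
        have hz : b' j₀ = 0 := by
          simp only [hb', hσ, hβ]
          by_cases h : 0 ≤ b j₀
          · rw [if_pos h, abs_of_nonneg h]; ring
          · rw [if_neg h, abs_of_neg (lt_of_not_ge h)]; ring
        have : ∑ j ∈ E.erase j₀, b' j • e j = ∑ j ∈ E, b' j • e j := by
          rw [← Finset.sum_erase_add E _ hj₀, hz, zero_smul, add_zero]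
        rw [this, Finset.smul_sum, ← Finset.sum_add_distrib]
        apply Finset.sum_congr rfl
        intro j _
        rw [smul_smul, ← add_smul, hb']
        congr 1
        ring
      have hb'abs : ∀ j ∈ E.erase j₀, |b' j| ≤ M - β := by
        intro j hj
        have hjE := Finset.mem_of_mem_erase hj
        have h1 : b' j = σ j * (|b j| - β) := by
          simp only [hb']
          rw [mul_sub, ← hbσ j]
          ring
        rw [h1, abs_mul, hσabs j, one_mul, abs_of_nonneg (by linarith [hmin j hjE])]
        linarith [hb j hjE]
      have hIH : ‖∑ j ∈ E.erase j₀, b' j • e j‖ ≤ (M - β) * Γ := by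
        apply ih (E.erase j₀) (Finset.erase_ssubset hj₀) b' (M - β) Γ (by linarith) hb'abs
        intro E' hE' ε hε
        exact hΓ E' (le_trans hE' (Finset.erase_subset _ _)) ε hε
      have h1 : ‖β • ∑ j ∈ E, σ j • e j‖ ≤ β * Γ := by
        rw [norm_smul, Real.norm_eq_abs, abs_of_nonneg hβ0]
        exact mul_le_mul_of_nonneg_left (hΓ E (le_refl _) σ (fun i _ => hσabs i)) hβ0
      calc ‖∑ j ∈ E, b j • e j‖ ≤ ‖β • ∑ j ∈ E, σ j • e j‖ + ‖∑ j ∈ E.erase j₀, b' j • e j‖ := by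
            rw [hsplit]; exact norm_add_le _ _
        _ ≤ β * Γ + (M - β) * Γ := add_le_add h1 hIH
        _ = M * Γ := by ring


set_option maxHeartbeats 1000000 in
/-- If a basis is quasi-greedy with constant `Cq` and
`𝐧`-order-conservative with constant `Δoc`, then for every `0 < t ≤ 1` it is
`𝐧`-`t`-partially greedy: there is a constant `C` depending only on `t`, `Cq`, `Δoc`
(and the scalar field, here ℝ) such that `‖x − P_A(x)‖ ≤ C‖x − S_n(x)‖` for every `x`,
every `n ∈ 𝐧`, and every `t`-greedy set `A` for `x` with `|A| = n`. -/
theorem stmt16 (t Cq Δoc : ℝ) (ht0 : 0 < t) (ht1 : t ≤ 1) (hCq : 0 < Cq) (hΔoc : 0 < Δoc) :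
    ∃ C : ℝ, 0 < C ∧
      ∀ (X : Type) [NormedAddCommGroup X] [NormedSpace ℝ X],
        ∀ (e : ℕ → X) (f : ℕ → X →L[ℝ] ℝ),
          (∀ i j, f i (e j) = if i = j then (1 : ℝ) else 0) →
          -- quasi-greedy with constant Cq
          (∀ (x : X) (A : Finset ℕ),
            (∀ i ∈ A, ∀ j ∉ A, |f j x| ≤ |f i x|) →
            ‖∑ i ∈ A, f i x • e i‖ ≤ Cq * ‖x‖) →
          ∀ (nseq : ℕ → ℕ), StrictMono nseq → 0 < nseq 0 →
            -- 𝐧-order-conservative with constant Δoc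
            (∀ (A B : Finset ℕ), A.card = B.card →
              (∃ k, A ⊆ Finset.range (nseq k) ∧ ∀ j ∈ B, nseq k ≤ j) →
              ‖∑ i ∈ A, e i‖ ≤ Δoc * ‖∑ i ∈ B, e i‖) →
            ∀ (x : X) (k : ℕ) (A : Finset ℕ), A.card = nseq k →
              (∀ i ∈ A, ∀ j ∉ A, t * |f j x| ≤ |f i x|) →
              ‖x - ∑ i ∈ A, f i x • e i‖ ≤
                C * ‖x - ∑ i ∈ Finset.range (nseq k), f i x • e i‖ := by
  set K₂ : ℝ := 8*Cq^2 + 32*Cq^3*Δoc with hK₂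
  set KB : ℝ := 4*Cq^2 + 2*Cq*K₂ with hKB
  have hK₂pos : 0 < K₂ := by positivity
  have hKBpos : 0 < KB := by positivity
  refine ⟨1 + Cq + (KB*(1 + 2*Cq*Δoc))/t, by positivity, ?_⟩
  set C : ℝ := 1 + Cq + (KB*(1 + 2*Cq*Δoc))/t with hC
  intro X _ _ e f hbi hQG nseq hmono hpos hcons x k A hcard hgreedy
  set n := nseq k with hn
  set S := Finset.range n with hS
  set y := x - ∑ i ∈ S, f i x • e i with hy
  have hfy : ∀ j, f j y = if j ∈ S then 0 else f j x := by
    intro j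
    rw [hy, map_sub, coef_sum hbi]
    by_cases h : j ∈ S <;> simp [h]
  have hyn : (0:ℝ) ≤ ‖y‖ := norm_nonneg _
  -- A is nonempty
  have hAne : A.Nonempty := by
    rw [← Finset.card_pos, hcard]
    exact lt_of_lt_of_le hpos (hmono.monotone (Nat.zero_le k))
  obtain ⟨i₀, hi₀, hmin⟩ := A.exists_min_image (fun i => |f i x|) hAne
  set a := |f i₀ x| with ha
  have houtx : ∀ j ∉ A, t * |f j x| ≤ a := fun j hj => hgreedy i₀ hi₀ j hj
  -- main identity
  have hident : x - ∑ i ∈ A, f i x • e i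
      = y + (∑ i ∈ S \ A, f i x • e i) - (∑ i ∈ A \ S, f i x • e i) := by
    have h1 : (∑ i ∈ S \ A, f i x • e i) + ∑ i ∈ S ∩ A, f i x • e i
        = ∑ i ∈ S, f i x • e i := by
      rw [← Finset.sdiff_inter_self_left S A]
      exact Finset.sum_sdiff Finset.inter_subset_left
    have h2 : (∑ i ∈ A \ S, f i x • e i) + ∑ i ∈ A ∩ S, f i x • e i
        = ∑ i ∈ A, f i x • e i := by
      rw [← Finset.sdiff_inter_self_left A S]
      exact Finset.sum_sdiff Finset.inter_subset_left
    have h3 : S ∩ A = A ∩ S := Finset.inter_comm _ _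
    rw [hy, ← h1, ← h2, h3]
    abel
  have hnorm1 : ‖x - ∑ i ∈ A, f i x • e i‖
      ≤ ‖y‖ + ‖∑ i ∈ S \ A, f i x • e i‖ + ‖∑ i ∈ A \ S, f i x • e i‖ := by
    rw [hident]
    exact le_trans (norm_sub_le _ _) (by gcongr; exact norm_add_le _ _)
  have hCge : 1 + Cq ≤ C := by
    rw [hC]
    have : 0 ≤ (KB*(1 + 2*Cq*Δoc))/t := by positivity
    linarith
  by_cases hA0 : a ≤ 0
  · -- degenerate case: min coefficient is 0
    have ha0 : a = 0 := le_antisymm hA0 (abs_nonneg _)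
    have hzero : ∀ j, j ∉ A → f j x = 0 := by
      intro j hj
      have := houtx j hj
      rw [ha0] at this
      have habs : |f j x| ≤ 0 := by nlinarith [abs_nonneg (f j x)]
      exact abs_eq_zero.mp (le_antisymm habs (abs_nonneg _))
    have hSA0 : ∑ i ∈ S \ A, f i x • e i = 0 := by
      apply Finset.sum_eq_zero
      intro j hj
      rw [hzero j (Finset.mem_sdiff.mp hj).2, zero_smul]
    set B' := (A \ S).filter (fun i => f i y ≠ 0) with hB'
    have hASy : ∑ i ∈ A \ S, f i x • e i = ∑ i ∈ B', f i y • e i := by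
      rw [hB', Finset.sum_filter]
      apply Finset.sum_congr rfl
      intro i hi
      have hiS : i ∉ S := (Finset.mem_sdiff.mp hi).2
      have : f i y = f i x := by rw [hfy i, if_neg hiS]
      by_cases h : f i y ≠ 0
      · rw [if_pos h, this]
      · rw [if_neg h]
        push_neg at h
        rw [← this, h, zero_smul]
    have hB'g : ∀ i ∈ B', ∀ j ∉ B', |f j y| ≤ |f i y| := by
      intro i _ j hj
      have : f j y = 0 := by
        by_cases hjS : j ∈ S
        · rw [hfy j, if_pos hjS]
        · by_cases hjA : j ∈ A
          · by_contra hne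
            exact hj (Finset.mem_filter.mpr ⟨Finset.mem_sdiff.mpr ⟨hjA, hjS⟩, hne⟩)
          · rw [hfy j, if_neg hjS]
            exact hzero j hjA
      rw [this, abs_zero]
      exact abs_nonneg _
    have hQB' := hQG y B' hB'g
    calc ‖x - ∑ i ∈ A, f i x • e i‖
        ≤ ‖y‖ + ‖∑ i ∈ S \ A, f i x • e i‖ + ‖∑ i ∈ A \ S, f i x • e i‖ := hnorm1
      _ ≤ ‖y‖ + 0 + Cq * ‖y‖ := by
          rw [hSA0, hASy]
          simp only [norm_zero]
          gcongr
      _ ≤ C * ‖y‖ := by nlinarith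
  · push_neg at hA0
    -- main case : a > 0
    set M := a / t with hMdef
    have hMpos : 0 < M := by positivity
    have haM : a ≤ M := by
      rw [hMdef, le_div_iff₀ ht0]
      nlinarith
    have houtxM : ∀ j ∉ A, |f j x| ≤ M := by
      intro j hj
      rw [hMdef, le_div_iff₀ ht0]
      have := houtx j hj
      nlinarith
    set B := A \ S with hB
    have hyB : ∀ i ∈ B, a ≤ |f i y| := by
      intro i hi
      obtain ⟨hiA, hiS⟩ := Finset.mem_sdiff.mp hi
      rw [hfy i, if_neg hiS]
      exact hmin i hiA
    have hyMout : ∀ j ∉ B, |f j y| ≤ M := by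
      intro j hj
      by_cases hjS : j ∈ S
      · rw [hfy j, if_pos hjS, abs_zero]; exact hMpos.le
      · have hjA : j ∉ A := fun hjA => hj (Finset.mem_sdiff.mpr ⟨hjA, hjS⟩)
        rw [hfy j, if_neg hjS]
        exact houtxM j hjA
    set B₁ := B.filter (fun i => M < |f i y|) with hB₁
    set B₂ := B.filter (fun i => ¬ M < |f i y|) with hB₂
    have hB₁sub : B₁ ⊆ B := Finset.filter_subset _ _
    have hB₂sub : B₂ ⊆ B := Finset.filter_subset _ _
    have hyB₁out : ∀ j ∉ B₁, |f j y| ≤ M := by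
      intro j hj
      by_cases hjB : j ∈ B
      · by_contra hlt
        push_neg at hlt
        exact hj (Finset.mem_filter.mpr ⟨hjB, hlt⟩)
      · exact hyMout j hjB
    -- sign function of y
    have hσy1 : ∀ i, f i y ≠ 0 → abs (f i y / |f i y|) = 1 := by
      intro i hne
      rw [abs_div, abs_abs, div_self (abs_ne_zero.mpr hne)]
    -- truncation bound on B₁
    have tB1 : M * ‖∑ i ∈ B₁, (f i y / |f i y|) • e i‖ ≤ 2 * (Cq * ‖y‖) := by
      apply trunc hQG B₁ y M hMpos
      · intro i hi
        exact (Finset.mem_filter.mp hi).2.le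
      · exact hyB₁out
    have nB1a : a * ‖∑ i ∈ B₁, (f i y / |f i y|) • e i‖ ≤ 2 * (Cq * ‖y‖) := by
      refine le_trans ?_ tB1
      exact mul_le_mul_of_nonneg_right haM (norm_nonneg _)
    have hσyB₁ : ∀ i ∈ B₁, abs (f i y / |f i y|) = 1 := by
      intro i hi
      apply hσy1
      intro h0
      have := (Finset.mem_filter.mp hi).2
      rw [h0, abs_zero] at this
      exact absurd this (not_lt.mpr hMpos.le)
    -- the key bound on the indicator of B₂
    have nB2 : a * ‖∑ i ∈ B₂, (1:ℝ) • e i‖ ≤ K₂ * ‖y‖ := by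
      by_cases hW : ({j : ℕ | a/2 < |f j y|}).Finite
      · -- top-level sets of y are finite down to level a/2
        set G := hW.toFinset with hG
        have hWmem : ∀ i, i ∈ G ↔ a/2 < |f i y| := by
          intro i
          rw [hG, Set.Finite.mem_toFinset, Set.mem_setOf_eq]
        have tG : (a/2) * ‖∑ i ∈ G, (f i y / |f i y|) • e i‖ ≤ 2 * (Cq * ‖y‖) := by
          apply trunc hQG G y (a/2) (by positivity)
          · intro i hi
            exact ((hWmem i).mp hi).le
          · intro j hj
            by_contra h
            push_neg at h
            exact hj ((hWmem j).mpr h)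
        have hB₂G : B₂ ⊆ G := by
          intro i hi
          exact (hWmem i).mpr (lt_of_lt_of_le (by linarith) (hyB i (hB₂sub hi)))
        have hσyG : ∀ i ∈ G, abs (f i y / |f i y|) = 1 := by
          intro i hi
          apply hσy1
          intro h0
          have := (hWmem i).mp hi
          rw [h0, abs_zero] at this
          linarith
        have sfB2 : ‖∑ i ∈ B₂, (1:ℝ) • e i‖ ≤ 2*Cq*‖∑ i ∈ G, (f i y / |f i y|) • e i‖ :=
          sf hbi hQG hB₂G hσyG (fun i _ => abs_one)
        set NG := ‖∑ i ∈ G, (f i y / |f i y|) • e i‖ with hNG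
        have hNG0 : 0 ≤ NG := norm_nonneg _
        have h1 : a * ‖∑ i ∈ B₂, (1:ℝ) • e i‖ ≤ a * (2*Cq*NG) :=
          mul_le_mul_of_nonneg_left sfB2 hA0.le
        have h2 : a * NG ≤ 2 * (2 * (Cq * ‖y‖)) := by nlinarith
        rw [hK₂]
        nlinarith [norm_nonneg (∑ i ∈ B₂, (1:ℝ) • e i),
          mul_le_mul_of_nonneg_left h2 (by positivity : (0:ℝ) ≤ 2*Cq),
          mul_nonneg (by positivity : (0:ℝ) ≤ 32*Cq^3*Δoc) hyn]
      · -- infinitely many coefficients above a/2 : go to the essential sup level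
        have hWinf : ({j : ℕ | a/2 < |f j y|}).Infinite := hW
        set I : Set ℝ := {c | ({j : ℕ | c < |f j y|}).Infinite} with hI
        have hI1 : a/2 ∈ I := hWinf
        have hub : ∀ c ∈ I, c ≤ M := by
          intro c hc
          by_contra h
          push_neg at h
          apply hc
          apply Set.Finite.subset B.finite_toSet
          intro j hj
          simp only [Set.mem_setOf_eq] at hj
          by_contra hjB
          exact absurd (hyMout j hjB) (not_le.mpr (lt_trans h hj))
        have hIbdd : BddAbove I := ⟨M, fun c hc => hub c hc⟩
        set sV := sSup I with hsV
        have hs2 : a/2 ≤ sV := le_csSup hIbdd hI1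
        have hsVpos : 0 < sV := lt_of_lt_of_le (by positivity) hs2
        set lam := min (sV/2) (sV/(8*Cq^2)) with hlam
        have hlam0 : 0 < lam := lt_min (by positivity) (by positivity)
        have hlam1 : lam ≤ sV/2 := min_le_left _ _
        have hlam4 : lam * (8*Cq^2) ≤ sV :=
          (le_div_iff₀ (by positivity : (0:ℝ) < 8*Cq^2)).mp (min_le_right _ _)
        have hHfin : ({j : ℕ | sV + lam/4 < |f j y|}).Finite := by
          by_contra h
          have : sV + lam/4 ∈ I := h
          have := le_csSup hIbdd this
          linarith
        set Hf := hHfin.toFinset with hHf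
        have hHmem : ∀ i, i ∈ Hf ↔ sV + lam/4 < |f i y| := by
          intro i
          rw [hHf, Set.Finite.mem_toFinset, Set.mem_setOf_eq]
        set Kk := B₂.sup id + 1 with hKk
        have hB₂range : ∀ i ∈ B₂, i < nseq Kk := by
          intro i hi
          have h1 : i ≤ B₂.sup id := Finset.le_sup (f := id) hi
          have h2 : Kk ≤ nseq Kk := hmono.le_apply
          omega
        have hbig : ({j : ℕ | sV - lam/2 < |f j y|}).Infinite := by
          obtain ⟨c, hcI, hclt⟩ :=
            exists_lt_of_lt_csSup (Set.nonempty_of_mem hI1)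
              (show sV - lam/2 < sV by linarith)
          have hsubset : {j : ℕ | c < |f j y|} ⊆ {j : ℕ | sV - lam/2 < |f j y|} := by
            intro j hj
            simp only [Set.mem_setOf_eq] at hj ⊢
            linarith
          exact Set.Infinite.mono hsubset
            (show ({j : ℕ | c < |f j y|}).Infinite from hcI)
        have hbig2 : (({j : ℕ | sV - lam/2 < |f j y|}) \
            ((↑Hf : Set ℕ) ∪ (↑(Finset.range (nseq Kk)) : Set ℕ))).Infinite :=
          hbig.diff ((Hf.finite_toSet).union (Finset.range (nseq Kk)).finite_toSet)
        obtain ⟨F, hFsub, hFcard⟩ := hbig2.exists_subset_card_eq B₂.card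
        have hFbig : ∀ j ∈ F, sV - lam/2 < |f j y| := by
          intro j hj
          have := (hFsub hj).1
          simpa [Set.mem_setOf_eq] using this
        have hFnotH : ∀ j ∈ F, ¬ (sV + lam/4 < |f j y|) := by
          intro j hj
          have h2 := (hFsub hj).2
          intro hcon
          exact h2 (Or.inl ((hHmem j).mpr hcon))
        have hFge : ∀ j ∈ F, nseq Kk ≤ j := by
          intro j hj
          have h2 := (hFsub hj).2
          by_contra h
          push_neg at h
          exact h2 (Or.inr (by simpa using Finset.mem_range.mpr h))
        have hFne0 : ∀ j ∈ F, f j y ≠ 0 := by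
          intro j hj h0
          have := hFbig j hj
          rw [h0, abs_zero] at this
          linarith
        have hσyF : ∀ i ∈ F, abs (f i y / |f i y|) = 1 := fun i hi => hσy1 i (hFne0 i hi)
        set z := y + ∑ j ∈ F, (lam * (f j y / |f j y|)) • e j with hz
        have hfz : ∀ j, f j z = f j y + (if j ∈ F then lam * (f j y / |f j y|) else 0) := by
          intro j
          rw [hz, map_add, coef_sum hbi]
        have habsF : ∀ j ∈ F, |f j z| = |f j y| + lam := by
          intro j hj
          have h0 := hFne0 j hj
          have habs0 : (0:ℝ) < |f j y| := abs_pos.mpr h0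
          have hform : f j z = f j y * (1 + lam / |f j y|) := by
            rw [hfz j, if_pos hj]
            field_simp
          rw [hform, abs_mul, abs_of_pos (by positivity : (0:ℝ) < 1 + lam / |f j y|)]
          field_simp
        have hFHdisj : ∀ j ∈ Hf, j ∉ F := by
          intro j hjH hjF
          exact hFnotH j hjF ((hHmem j).mp hjH)
        set G := Hf ∪ F with hG
        set mv := sV + lam/4 with hmv
        have hmvpos : 0 < mv := by positivity
        have hzG1 : ∀ i ∈ G, mv ≤ |f i z| := by
          intro i hi
          rcases Finset.mem_union.mp hi with hiH | hiF
          · have : f i z = f i y := by rw [hfz i, if_neg (hFHdisj i hiH), add_zero]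
            rw [this]
            exact ((hHmem i).mp hiH).le
          · rw [habsF i hiF]
            have := hFbig i hiF
            rw [hmv]; linarith
        have hzG2 : ∀ j ∉ G, |f j z| ≤ mv := by
          intro j hj
          have hjH : j ∉ Hf := fun h => hj (Finset.mem_union.mpr (Or.inl h))
          have hjF : j ∉ F := fun h => hj (Finset.mem_union.mpr (Or.inr h))
          have : f j z = f j y := by rw [hfz j, if_neg hjF, add_zero]
          rw [this]
          by_contra h
          push_neg at h
          exact hjH ((hHmem j).mpr (by rw [hmv] at h; exact h))
        have hσzG : ∀ i ∈ G, abs (f i z / |f i z|) = 1 := by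
          intro i hi
          have : f i z ≠ 0 := by
            intro h0
            have := hzG1 i hi
            rw [h0, abs_zero] at this
            linarith
          rw [abs_div, abs_abs, div_self (abs_ne_zero.mpr this)]
        have tZ : mv * ‖∑ i ∈ G, (f i z / |f i z|) • e i‖ ≤ 2 * (Cq * ‖z‖) :=
          trunc hQG G z mv hmvpos hzG1 hzG2
        set Q := ‖∑ j ∈ F, (f j y / |f j y|) • e j‖ with hQdef
        have hQ0 : 0 ≤ Q := norm_nonneg _
        have sfF : Q ≤ 2*Cq*‖∑ i ∈ G, (f i z / |f i z|) • e i‖ :=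
          sf hbi hQG Finset.subset_union_right hσzG hσyF
        have normz : ‖z‖ ≤ ‖y‖ + lam * Q := by
          rw [hz]
          refine le_trans (norm_add_le _ _) ?_
          have : ∑ j ∈ F, (lam * (f j y / |f j y|)) • e j = lam • ∑ j ∈ F, (f j y / |f j y|) • e j := by
            rw [Finset.smul_sum]
            apply Finset.sum_congr rfl
            intro j _
            rw [smul_smul]
          rw [this, norm_smul, Real.norm_eq_abs, abs_of_pos hlam0]
        set NG := ‖∑ i ∈ G, (f i z / |f i z|) • e i‖ with hNG
        have hNG0 : 0 ≤ NG := norm_nonneg _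
        have h5 : sV * Q ≤ 2*Cq*(sV*NG) := by
          calc sV * Q ≤ sV * (2*Cq*NG) := mul_le_mul_of_nonneg_left sfF hsVpos.le
            _ = 2*Cq*(sV*NG) := by ring
        have h6 : sV * NG ≤ 2 * (Cq * ‖z‖) := by
          have : sV * NG ≤ mv * NG :=
            mul_le_mul_of_nonneg_right (by rw [hmv]; linarith) hNG0
          exact le_trans this tZ
        have h8 : ‖z‖ ≤ ‖y‖ + lam * Q := normz
        have hQfin : a * Q ≤ 16*Cq^2*‖y‖ := by
          nlinarith [mul_le_mul_of_nonneg_left h6 (by positivity : (0:ℝ) ≤ 2*Cq),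
            mul_le_mul_of_nonneg_left h8 (by positivity : (0:ℝ) ≤ 4*Cq^2),
            mul_le_mul_of_nonneg_right hlam4 hQ0]
        -- conservativeness : transfer to B₂
        have cB2 : ‖∑ i ∈ B₂, e i‖ ≤ Δoc * ‖∑ i ∈ F, e i‖ :=
          hcons B₂ F hFcard.symm
            ⟨Kk, fun i hi => Finset.mem_range.mpr (hB₂range i hi), hFge⟩
        have sfFone : ‖∑ i ∈ F, (1:ℝ) • e i‖ ≤ 2*Cq*Q :=
          sf hbi hQG (le_refl F) hσyF (fun i _ => abs_one)
        have hone : ∀ (T : Finset ℕ), ∑ i ∈ T, (1:ℝ) • e i = ∑ i ∈ T, e i := by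
          intro T
          apply Finset.sum_congr rfl
          intro i _
          rw [one_smul]
        have chain : ‖∑ i ∈ B₂, (1:ℝ) • e i‖ ≤ Δoc * (2*Cq*Q) := by
          rw [hone]
          refine le_trans cB2 ?_
          have : ‖∑ i ∈ F, e i‖ ≤ 2*Cq*Q := by rw [← hone]; exact sfFone
          exact mul_le_mul_of_nonneg_left this hΔoc.le
        rw [hK₂]
        nlinarith [mul_le_mul_of_nonneg_left chain hA0.le,
          mul_le_mul_of_nonneg_left hQfin (by positivity : (0:ℝ) ≤ 2*Cq*Δoc),
          norm_nonneg (∑ i ∈ B₂, (1:ℝ) • e i), hyn]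
    have hone : ∀ (T : Finset ℕ), ∑ i ∈ T, (1:ℝ) • e i = ∑ i ∈ T, e i := by
      intro T
      apply Finset.sum_congr rfl
      intro i _
      rw [one_smul]
    -- master indicator bound over subsets of B
    have keyB : ∀ E ⊆ B, ∀ ε : ℕ → ℝ, (∀ i ∈ E, |ε i| = 1) →
        a * ‖∑ i ∈ E, ε i • e i‖ ≤ KB * ‖y‖ := by
      intro E hEB ε hε
      have hsplitE : ∑ i ∈ E, ε i • e i
          = (∑ i ∈ E \ B₁, ε i • e i) + ∑ i ∈ E ∩ B₁, ε i • e i := by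
        rw [← Finset.sdiff_inter_self_left E B₁]
        exact (Finset.sum_sdiff Finset.inter_subset_left).symm
      have h1 : ‖∑ i ∈ E ∩ B₁, ε i • e i‖
          ≤ 2*Cq*‖∑ i ∈ B₁, (f i y / |f i y|) • e i‖ :=
        sf hbi hQG Finset.inter_subset_right hσyB₁
          (fun i hi => hε i (Finset.mem_inter.mp hi).1)
      have hEB₂ : E \ B₁ ⊆ B₂ := by
        intro j hj
        obtain ⟨hjE, hjB₁⟩ := Finset.mem_sdiff.mp hj
        refine Finset.mem_filter.mpr ⟨hEB hjE, ?_⟩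
        intro hlt
        exact hjB₁ (Finset.mem_filter.mpr ⟨hEB hjE, hlt⟩)
      have h2 : ‖∑ i ∈ E \ B₁, ε i • e i‖ ≤ 2*Cq*‖∑ i ∈ B₂, (1:ℝ) • e i‖ :=
        sf hbi hQG hEB₂ (fun i _ => abs_one)
          (fun i hi => hε i (Finset.mem_sdiff.mp hi).1)
      have h3 : a * ‖∑ i ∈ E, ε i • e i‖
          ≤ a * ‖∑ i ∈ E \ B₁, ε i • e i‖ + a * ‖∑ i ∈ E ∩ B₁, ε i • e i‖ := by
        rw [hsplitE, ← mul_add]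
        exact mul_le_mul_of_nonneg_left (norm_add_le _ _) hA0.le
      rw [hKB]
      nlinarith [mul_le_mul_of_nonneg_left h1 hA0.le,
        mul_le_mul_of_nonneg_left h2 hA0.le,
        mul_le_mul_of_nonneg_left nB1a (by positivity : (0:ℝ) ≤ 2*Cq),
        mul_le_mul_of_nonneg_left nB2 (by positivity : (0:ℝ) ≤ 2*Cq)]
    have hane : a ≠ 0 := ne_of_gt hA0
    have keyBdiv : ∀ E ⊆ B, ∀ ε : ℕ → ℝ, (∀ i ∈ E, |ε i| = 1) →
        ‖∑ i ∈ E, ε i • e i‖ ≤ KB * ‖y‖ / a := by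
      intro E hEB ε hε
      rw [le_div_iff₀ hA0]
      calc ‖∑ i ∈ E, ε i • e i‖ * a = a * ‖∑ i ∈ E, ε i • e i‖ := by ring
        _ ≤ KB * ‖y‖ := keyB E hEB ε hε
    -- Part (i) : the A \ S part
    have hresum : ∑ i ∈ B, f i x • e i = ∑ i ∈ B, f i y • e i := by
      apply Finset.sum_congr rfl
      intro i hi
      rw [hfy i, if_neg (Finset.mem_sdiff.mp hi).2]
    have hsplitB : ∑ i ∈ B, f i y • e i
        = (∑ i ∈ B₁, f i y • e i) + ∑ i ∈ B₂, f i y • e i :=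
      (Finset.sum_filter_add_sum_filter_not B _ _).symm
    have hQB₁ : ‖∑ i ∈ B₁, f i y • e i‖ ≤ Cq * ‖y‖ := by
      apply hQG y B₁
      intro i hi j hj
      exact le_trans (hyB₁out j hj) (Finset.mem_filter.mp hi).2.le
    have hboxB₂ : ‖∑ i ∈ B₂, f i y • e i‖ ≤ M * (KB * ‖y‖ / a) := by
      apply box B₂ (fun j => f j y) M (KB * ‖y‖ / a) hMpos.le
      · intro j hj
        exact not_lt.mp (Finset.mem_filter.mp hj).2
      · intro E' hE' ε hε
        exact keyBdiv E' (hE'.trans hB₂sub) ε hε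
    have hMG1 : M * (KB * ‖y‖ / a) = KB * ‖y‖ / t := by
      rw [hMdef]
      field_simp
    have partI : ‖∑ i ∈ B, f i x • e i‖ ≤ Cq * ‖y‖ + KB * ‖y‖ / t := by
      rw [hresum, hsplitB]
      refine le_trans (norm_add_le _ _) ?_
      rw [← hMG1]
      exact add_le_add hQB₁ hboxB₂
    -- Part (ii) : the S \ A part
    have cardSA : (S \ A).card = B.card := by
      apply Finset.card_sdiff_comm
      rw [hS, Finset.card_range, hcard]
    have hΓ₂ : ∀ E' ⊆ S \ A, ∀ ε : ℕ → ℝ, (∀ i ∈ E', |ε i| = 1) →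
        ‖∑ i ∈ E', ε i • e i‖ ≤ 2*Cq*(Δoc*(KB * ‖y‖ / a)) := by
      intro E' hE' ε hε
      have step1 : ‖∑ i ∈ E', ε i • e i‖ ≤ 2*Cq*‖∑ i ∈ E', (1:ℝ) • e i‖ :=
        sf hbi hQG (le_refl E') (fun i _ => abs_one) hε
      have hcardle : E'.card ≤ B.card := by
        rw [← cardSA]
        exact Finset.card_le_card hE'
      obtain ⟨F₀, hF₀sub, hF₀card⟩ := Finset.exists_subset_card_eq hcardle
      have hconsE : ‖∑ i ∈ E', e i‖ ≤ Δoc * ‖∑ i ∈ F₀, e i‖ := by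
        apply hcons E' F₀ hF₀card.symm
        refine ⟨k, ?_, ?_⟩
        · intro i hi
          have := (Finset.mem_sdiff.mp (hE' hi)).1
          rwa [hS, hn] at this
        · intro j hj
          have hjB := hF₀sub hj
          have hjS := (Finset.mem_sdiff.mp hjB).2
          rw [hS] at hjS
          have : ¬ j < n := fun hlt => hjS (Finset.mem_range.mpr hlt)
          rw [← hn]
          omega
      have step3 : ‖∑ i ∈ F₀, (1:ℝ) • e i‖ ≤ KB * ‖y‖ / a :=
        keyBdiv F₀ hF₀sub (fun _ => 1) (fun i _ => abs_one)
      calc ‖∑ i ∈ E', ε i • e i‖ ≤ 2*Cq*‖∑ i ∈ E', (1:ℝ) • e i‖ := step1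
        _ = 2*Cq*‖∑ i ∈ E', e i‖ := by rw [hone]
        _ ≤ 2*Cq*(Δoc * ‖∑ i ∈ F₀, e i‖) :=
            mul_le_mul_of_nonneg_left hconsE (by positivity)
        _ = 2*Cq*(Δoc * ‖∑ i ∈ F₀, (1:ℝ) • e i‖) := by rw [hone]
        _ ≤ 2*Cq*(Δoc*(KB * ‖y‖ / a)) := by
            apply mul_le_mul_of_nonneg_left _ (by positivity : (0:ℝ) ≤ 2*Cq)
            exact mul_le_mul_of_nonneg_left step3 hΔoc.le
    have hboxSA : ‖∑ j ∈ S \ A, f j x • e j‖ ≤ M * (2*Cq*(Δoc*(KB * ‖y‖ / a))) := by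
      apply box (S \ A) (fun j => f j x) M _ hMpos.le
      · intro j hj
        exact houtxM j (Finset.mem_sdiff.mp hj).2
      · exact hΓ₂
    have hMG2 : M * (2*Cq*(Δoc*(KB * ‖y‖ / a))) = 2*Cq*Δoc*KB*‖y‖/t := by
      rw [hMdef]
      field_simp
    have partII : ‖∑ j ∈ S \ A, f j x • e j‖ ≤ 2*Cq*Δoc*KB*‖y‖/t := by
      rw [← hMG2]
      exact hboxSA
    -- conclusion
    have hCexp : C * ‖y‖ = ‖y‖ + Cq * ‖y‖ + KB * ‖y‖ / t + 2*Cq*Δoc*KB*‖y‖/t := by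
      rw [hC]
      ring
    calc ‖x - ∑ i ∈ A, f i x • e i‖
        ≤ ‖y‖ + ‖∑ i ∈ S \ A, f i x • e i‖ + ‖∑ i ∈ B, f i x • e i‖ := hnorm1
      _ ≤ ‖y‖ + (2*Cq*Δoc*KB*‖y‖/t) + (Cq * ‖y‖ + KB * ‖y‖ / t) := by
          exact add_le_add (add_le_add le_rfl partII) partI
      _ ≤ C * ‖y‖ := by rw [hCexp]; ring_nf; linarith
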